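/- Let L > 0 be fixed and let K(k) = ∫₀^{π/2} (1 - k² sin²θ)^{-1/2} dθ denote the complete elliptic integral of the first kind. Define ω: (0,1) → ℝ by ω(k) = 16 K(k)² ((1-k²)√(k⁴-k²+1) + k⁴-k²+1) / ((1 + √(k⁴-k²+1) - k²) L²). Then ω is strictly increasing on (0,1), ω(k) → 4π²/L² as k → 0⁺, and ω(k) → ∞ as k → 1⁻; in particular ω is a bijection from (0,1) onto (4π²/L², ∞). -/

import Mathlib

open Real Set Filter

/-- The complete elliptic integral of the first kind
`K(k) = ∫₀^{π/2} (1 - k² sin²θ)^{-1/2} dθ`. -/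
noncomputable def ellipticK (k : ℝ) : ℝ :=
  ∫ θ in (0 : ℝ)..(Real.pi / 2), 1 / Real.sqrt (1 - k ^ 2 * Real.sin θ ^ 2)

/-- The wave frequency `ω(k)` of the cnoidal wave, as a function of the elliptic
modulus `k ∈ (0,1)`. -/
noncomputable def omegaOf (L k : ℝ) : ℝ :=
  16 * ellipticK k ^ 2 * ((1 - k ^ 2) * Real.sqrt (k ^ 4 - k ^ 2 + 1) + k ^ 4 - k ^ 2 + 1) /
    ((1 + Real.sqrt (k ^ 4 - k ^ 2 + 1) - k ^ 2) * L ^ 2)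

/-! ### Auxiliary lemmas -/

lemma Q_pos (k : ℝ) : 0 < k ^ 4 - k ^ 2 + 1 := by nlinarith [sq_nonneg (k ^ 2 - 1/2)]

lemma sqrtQ_pos (k : ℝ) : 0 < Real.sqrt (k ^ 4 - k ^ 2 + 1) := Real.sqrt_pos.2 (Q_pos k)

lemma sq_sqrtQ (k : ℝ) : Real.sqrt (k ^ 4 - k ^ 2 + 1) ^ 2 = k ^ 4 - k ^ 2 + 1 :=
  Real.sq_sqrt (Q_pos k).le

lemma u_pos {k : ℝ} (hk : k ^ 2 < 1) (θ : ℝ) : 0 < 1 - k ^ 2 * Real.sin θ ^ 2 := by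
  nlinarith [Real.sin_sq_le_one θ, sq_nonneg k]

lemma cont_div_sqrt {x : ℝ} (hx2 : x ^ 2 < 1) {g : ℝ → ℝ} (hg : Continuous g) :
    Continuous fun θ => g θ / Real.sqrt (1 - x ^ 2 * Real.sin θ ^ 2) :=
  hg.div ((continuous_const.sub (continuous_const.mul (Real.continuous_sin.pow 2))).sqrt)
    fun θ => (Real.sqrt_pos.2 (u_pos hx2 θ)).ne'

lemma cont_div_sqrt3 {x : ℝ} (hx2 : x ^ 2 < 1) {g : ℝ → ℝ} (hg : Continuous g) :
    Continuous fun θ => g θ / Real.sqrt (1 - x ^ 2 * Real.sin θ ^ 2) ^ 3 :=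
  hg.div (((continuous_const.sub (continuous_const.mul (Real.continuous_sin.pow 2))).sqrt).pow 3)
    fun θ => pow_ne_zero 3 (Real.sqrt_pos.2 (u_pos hx2 θ)).ne'

lemma ellipticK_pos {k : ℝ} (hk : k ^ 2 < 1) : 0 < ellipticK k := by
  apply intervalIntegral.intervalIntegral_pos_of_pos
  · exact (cont_div_sqrt hk continuous_const).intervalIntegrable _ _
  · intro θ
    have := u_pos hk θ
    positivity
  · positivity

lemma omega_eq {L : ℝ} (hL : 0 < L) {k : ℝ} (hk : k ^ 2 ≤ 1) :
    omegaOf L k = 16 * ellipticK k ^ 2 * Real.sqrt (k ^ 4 - k ^ 2 + 1) / L ^ 2 := by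
  have hs2 := sq_sqrtQ k
  have hg : (0:ℝ) < 1 + Real.sqrt (k ^ 4 - k ^ 2 + 1) - k ^ 2 := by
    have := sqrtQ_pos k; linarith
  have hL2 : (0:ℝ) < L ^ 2 := by positivity
  unfold omegaOf
  rw [div_eq_div_iff (by positivity) hL2.ne']
  linear_combination (-(16:ℝ) * ellipticK k ^ 2 * L ^ 2) * hs2

/-! ### Symmetrization: `∫ sin²θ/√u ≥ K/2` -/

lemma point_sym {x s c : ℝ} (hx2 : x ^ 2 < 1) (hsc : s ^ 2 + c ^ 2 = 1) :
    0 ≤ (s ^ 2 - 1/2) / Real.sqrt (1 - x ^ 2 * s ^ 2) +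
      (c ^ 2 - 1/2) / Real.sqrt (1 - x ^ 2 * c ^ 2) := by
  have hs2 : s ^ 2 ≤ 1 := by nlinarith [sq_nonneg c]
  have hc2 : c ^ 2 ≤ 1 := by nlinarith [sq_nonneg s]
  have hus : 0 < 1 - x ^ 2 * s ^ 2 := by nlinarith [sq_nonneg x]
  have huc : 0 < 1 - x ^ 2 * c ^ 2 := by nlinarith [sq_nonneg x]
  have hA : 0 < Real.sqrt (1 - x ^ 2 * s ^ 2) := Real.sqrt_pos.2 hus
  have hB : 0 < Real.sqrt (1 - x ^ 2 * c ^ 2) := Real.sqrt_pos.2 huc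
  have hkey : (c ^ 2 - 1/2 : ℝ) = -(s ^ 2 - 1/2) := by linarith
  rw [hkey, neg_div, ← sub_eq_add_neg, div_sub_div _ _ hA.ne' hB.ne']
  apply div_nonneg _ (by positivity)
  rcases le_total (s ^ 2) (1/2 : ℝ) with h | h
  · have hBA : Real.sqrt (1 - x ^ 2 * c ^ 2) ≤ Real.sqrt (1 - x ^ 2 * s ^ 2) := by
      apply Real.sqrt_le_sqrt; nlinarith [sq_nonneg x]
    nlinarith [mul_nonneg (by linarith : (0:ℝ) ≤ 1/2 - s ^ 2)
      (by linarith : (0:ℝ) ≤ Real.sqrt (1 - x ^ 2 * s ^ 2) - Real.sqrt (1 - x ^ 2 * c ^ 2))]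
  · have hAB : Real.sqrt (1 - x ^ 2 * s ^ 2) ≤ Real.sqrt (1 - x ^ 2 * c ^ 2) := by
      apply Real.sqrt_le_sqrt; nlinarith [sq_nonneg x]
    nlinarith [mul_nonneg (by linarith : (0:ℝ) ≤ s ^ 2 - 1/2)
      (by linarith : (0:ℝ) ≤ Real.sqrt (1 - x ^ 2 * c ^ 2) - Real.sqrt (1 - x ^ 2 * s ^ 2))]

lemma half_le {x : ℝ} (hx2 : x ^ 2 < 1) :
    1/2 * ellipticK x ≤
      ∫ θ in (0:ℝ)..(π/2), Real.sin θ ^ 2 / Real.sqrt (1 - x ^ 2 * Real.sin θ ^ 2) := by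
  have hpi : (0:ℝ) ≤ π / 2 := by positivity
  set f : ℝ → ℝ := fun θ => (Real.sin θ ^ 2 - 1/2) / Real.sqrt (1 - x ^ 2 * Real.sin θ ^ 2)
    with hf
  have hcont : Continuous f := cont_div_sqrt hx2 (by continuity)
  have hint : IntervalIntegrable f MeasureTheory.volume 0 (π/2) := hcont.intervalIntegrable _ _
  have hcont2 : Continuous fun θ => f (π/2 - θ) := hcont.comp (by continuity)
  have hint2 : IntervalIntegrable (fun θ => f (π/2 - θ)) MeasureTheory.volume 0 (π/2) :=
    hcont2.intervalIntegrable _ _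
  have hflip : (∫ θ in (0:ℝ)..(π/2), f (π/2 - θ)) = ∫ θ in (0:ℝ)..(π/2), f θ := by
    rw [intervalIntegral.integral_comp_sub_left f (π/2)]
    norm_num
  have hsum : 0 ≤ ∫ θ in (0:ℝ)..(π/2), (f θ + f (π/2 - θ)) := by
    apply intervalIntegral.integral_nonneg hpi
    intro θ _
    have := point_sym (s := Real.sin θ) (c := Real.cos θ) hx2 (Real.sin_sq_add_cos_sq θ)
    simpa [hf, Real.sin_pi_div_two_sub] using this
  rw [intervalIntegral.integral_add hint hint2, hflip] at hsum
  have hpos : 0 ≤ ∫ θ in (0:ℝ)..(π/2), f θ := by linarith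
  have hsplit : (∫ θ in (0:ℝ)..(π/2), f θ) =
      (∫ θ in (0:ℝ)..(π/2), Real.sin θ ^ 2 / Real.sqrt (1 - x ^ 2 * Real.sin θ ^ 2)) -
        1/2 * ellipticK x := by
    unfold ellipticK
    have e1 : IntervalIntegrable
        (fun θ => Real.sin θ ^ 2 / Real.sqrt (1 - x ^ 2 * Real.sin θ ^ 2))
        MeasureTheory.volume 0 (π/2) :=
      (cont_div_sqrt hx2 (Real.continuous_sin.pow 2)).intervalIntegrable _ _
    have e2 : IntervalIntegrable
        (fun θ => (1:ℝ)/2 * (1 / Real.sqrt (1 - x ^ 2 * Real.sin θ ^ 2)))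
        MeasureTheory.volume 0 (π/2) :=
      (continuous_const.mul (cont_div_sqrt hx2 continuous_const)).intervalIntegrable _ _
    rw [← intervalIntegral.integral_const_mul, ← intervalIntegral.integral_sub e1 e2]
    congr 1
    funext θ
    simp only [hf]
    ring
  linarith [hsplit ▸ hpos]

/-! ### Derivative of `ellipticK` -/

lemma hasDerivAt_ellipticK {x : ℝ} (hx : x ∈ Ioo (0:ℝ) 1) :
    HasDerivAt ellipticK
      (∫ θ in (0:ℝ)..(π/2),
        x * Real.sin θ ^ 2 / Real.sqrt (1 - x ^ 2 * Real.sin θ ^ 2) ^ 3) x := by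
  obtain ⟨hx0, hx1⟩ := hx
  have hx2 : x ^ 2 < 1 := by nlinarith
  set b : ℝ := (1 + x) / 2 with hb
  have hxb : x < b := by rw [hb]; linarith
  have hb1 : b < 1 := by rw [hb]; linarith
  have hb0 : 0 < b := by rw [hb]; linarith
  set ε : ℝ := (1 - x) / 2 with hε
  have hε0 : 0 < ε := by rw [hε]; linarith
  have hball : ∀ y ∈ Metric.ball x ε, |y| < b := by
    intro y hy
    rw [Metric.mem_ball, Real.dist_eq] at hy
    calc |y| = |x + (y - x)| := by ring_nf
      _ ≤ |x| + |y - x| := abs_add_le _ _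
      _ < x + ε := by rw [abs_of_pos hx0]; linarith [le_refl (|x| : ℝ)]
      _ = b := by rw [hε, hb]; ring
  have hub : ∀ y : ℝ, |y| < b → ∀ θ : ℝ, 1 - b ^ 2 ≤ 1 - y ^ 2 * Real.sin θ ^ 2 := by
    intro y hy θ
    have h1 : y ^ 2 < b ^ 2 := by nlinarith [abs_nonneg y, sq_abs y]
    nlinarith [Real.sin_sq_le_one θ, sq_nonneg y]
  have hb2 : (0:ℝ) < 1 - b ^ 2 := by nlinarith
  have key := intervalIntegral.hasDerivAt_integral_of_dominated_loc_of_deriv_le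
    (F := fun y θ => 1 / Real.sqrt (1 - y ^ 2 * Real.sin θ ^ 2))
    (F' := fun y θ => y * Real.sin θ ^ 2 / Real.sqrt (1 - y ^ 2 * Real.sin θ ^ 2) ^ 3)
    (bound := fun _ => 1 / Real.sqrt (1 - b ^ 2) ^ 3)
    (a := (0:ℝ)) (b := π/2) (x₀ := x) (μ := MeasureTheory.volume) (Metric.ball_mem_nhds x hε0)
    ?_ ?_ ?_ ?_ ?_ ?_
  · exact key.2
  · -- measurability of F y for y near x
    filter_upwards [Metric.ball_mem_nhds x hε0] with y hy
    have hy2 : y ^ 2 < 1 := by nlinarith [hball y hy, abs_nonneg y, sq_abs y]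
    exact (cont_div_sqrt hy2 continuous_const).aestronglyMeasurable.restrict
  · exact (cont_div_sqrt hx2 continuous_const).intervalIntegrable _ _
  · exact (cont_div_sqrt3 hx2 (by continuity)).aestronglyMeasurable.restrict
  · -- bound
    apply MeasureTheory.ae_of_all
    intro θ _ y hy
    have hy' := hball y hy
    have hu := hub y hy' θ
    have hupos : 0 < 1 - y ^ 2 * Real.sin θ ^ 2 := lt_of_lt_of_le hb2 hu
    rw [Real.norm_eq_abs, abs_div]
    apply div_le_div₀ (by norm_num)
    · rw [abs_mul]
      have h1 : |y| ≤ 1 := by linarith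
      have h2 : |Real.sin θ ^ 2| ≤ 1 := by
        rw [abs_of_nonneg (sq_nonneg _)]; exact Real.sin_sq_le_one θ
      calc |y| * |Real.sin θ ^ 2| ≤ 1 * 1 := by
            apply mul_le_mul h1 h2 (abs_nonneg _) zero_le_one
        _ = 1 := by norm_num
    · positivity
    · rw [abs_of_nonneg (by positivity)]
      exact pow_le_pow_left₀ (Real.sqrt_nonneg _) (Real.sqrt_le_sqrt hu) 3
  · exact intervalIntegrable_const
  · -- differentiability in the parameter
    apply MeasureTheory.ae_of_all
    intro θ _ y hy
    have hy' := hball y hy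
    have hupos : 0 < 1 - y ^ 2 * Real.sin θ ^ 2 := lt_of_lt_of_le hb2 (hub y hy' θ)
    have hspos : 0 < Real.sqrt (1 - y ^ 2 * Real.sin θ ^ 2) := Real.sqrt_pos.2 hupos
    have h1 : HasDerivAt (fun z : ℝ => 1 - z ^ 2 * Real.sin θ ^ 2)
        (-(2 * y * Real.sin θ ^ 2)) y := by
      have := ((hasDerivAt_pow 2 y).mul_const (Real.sin θ ^ 2)).const_sub 1
      simpa using this
    have h2 : HasDerivAt (fun z : ℝ => Real.sqrt (1 - z ^ 2 * Real.sin θ ^ 2))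
        (1 / (2 * Real.sqrt (1 - y ^ 2 * Real.sin θ ^ 2)) * -(2 * y * Real.sin θ ^ 2)) y :=
      (Real.hasDerivAt_sqrt hupos.ne').comp y h1
    have h3 := h2.inv hspos.ne'
    have heq : -(1 / (2 * Real.sqrt (1 - y ^ 2 * Real.sin θ ^ 2)) * -(2 * y * Real.sin θ ^ 2)) /
        Real.sqrt (1 - y ^ 2 * Real.sin θ ^ 2) ^ 2 =
        y * Real.sin θ ^ 2 / Real.sqrt (1 - y ^ 2 * Real.sin θ ^ 2) ^ 3 := by
      have hsq : Real.sqrt (1 - y ^ 2 * Real.sin θ ^ 2) ^ 2 = 1 - y ^ 2 * Real.sin θ ^ 2 :=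
        Real.sq_sqrt hupos.le
      field_simp
    simp only [one_div]
    rw [← heq]
    exact h3

lemma deriv_ge {x : ℝ} (hx : x ∈ Ioo (0:ℝ) 1) :
    x / 2 * ellipticK x ≤
      ∫ θ in (0:ℝ)..(π/2),
        x * Real.sin θ ^ 2 / Real.sqrt (1 - x ^ 2 * Real.sin θ ^ 2) ^ 3 := by
  have hx2 : x ^ 2 < 1 := by nlinarith [hx.1, hx.2]
  have hint1 : IntervalIntegrable
      (fun θ => x * Real.sin θ ^ 2 / Real.sqrt (1 - x ^ 2 * Real.sin θ ^ 2))
      MeasureTheory.volume 0 (π/2) := (cont_div_sqrt hx2 (by continuity)).intervalIntegrable _ _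
  have hint3 : IntervalIntegrable
      (fun θ => x * Real.sin θ ^ 2 / Real.sqrt (1 - x ^ 2 * Real.sin θ ^ 2) ^ 3)
      MeasureTheory.volume 0 (π/2) := (cont_div_sqrt3 hx2 (by continuity)).intervalIntegrable _ _
  have h1 : (∫ θ in (0:ℝ)..(π/2),
      x * Real.sin θ ^ 2 / Real.sqrt (1 - x ^ 2 * Real.sin θ ^ 2)) ≤
      ∫ θ in (0:ℝ)..(π/2),
        x * Real.sin θ ^ 2 / Real.sqrt (1 - x ^ 2 * Real.sin θ ^ 2) ^ 3 := by
    apply intervalIntegral.integral_mono_on (by positivity) hint1 hint3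
    intro θ _
    have hu := u_pos hx2 θ
    have hsu : 0 < Real.sqrt (1 - x ^ 2 * Real.sin θ ^ 2) := Real.sqrt_pos.2 hu
    have hle1 : Real.sqrt (1 - x ^ 2 * Real.sin θ ^ 2) ≤ 1 :=
      Real.sqrt_le_one.mpr (by nlinarith [sq_nonneg (x * Real.sin θ)])
    have hsq1 : Real.sqrt (1 - x ^ 2 * Real.sin θ ^ 2) ^ 2 ≤ 1 := by nlinarith
    have hcube : Real.sqrt (1 - x ^ 2 * Real.sin θ ^ 2) ^ 3 ≤
        Real.sqrt (1 - x ^ 2 * Real.sin θ ^ 2) := by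
      calc Real.sqrt (1 - x ^ 2 * Real.sin θ ^ 2) ^ 3
          = Real.sqrt (1 - x ^ 2 * Real.sin θ ^ 2) ^ 2 *
            Real.sqrt (1 - x ^ 2 * Real.sin θ ^ 2) := by ring
        _ ≤ 1 * Real.sqrt (1 - x ^ 2 * Real.sin θ ^ 2) :=
            mul_le_mul_of_nonneg_right hsq1 hsu.le
        _ = _ := one_mul _
    exact div_le_div_of_nonneg_left (mul_nonneg hx.1.le (sq_nonneg _)) (pow_pos hsu 3) hcube
  have h2 : (∫ θ in (0:ℝ)..(π/2),
      x * Real.sin θ ^ 2 / Real.sqrt (1 - x ^ 2 * Real.sin θ ^ 2)) =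
      x * ∫ θ in (0:ℝ)..(π/2), Real.sin θ ^ 2 / Real.sqrt (1 - x ^ 2 * Real.sin θ ^ 2) := by
    rw [← intervalIntegral.integral_const_mul]
    congr 1
    funext θ
    ring
  have h3 := half_le hx2
  calc x / 2 * ellipticK x = x * (1/2 * ellipticK x) := by ring
    _ ≤ x * ∫ θ in (0:ℝ)..(π/2), Real.sin θ ^ 2 / Real.sqrt (1 - x ^ 2 * Real.sin θ ^ 2) :=
        mul_le_mul_of_nonneg_left h3 hx.1.le
    _ = ∫ θ in (0:ℝ)..(π/2), x * Real.sin θ ^ 2 / Real.sqrt (1 - x ^ 2 * Real.sin θ ^ 2) :=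
        h2.symm
    _ ≤ _ := h1

/-! ### Derivative of the simplified `ω` -/

lemma W_deriv {L x : ℝ} (hL : 0 < L) (hx : x ∈ Ioo (0:ℝ) 1) :
    ∃ d, HasDerivAt (fun k => 16 * ellipticK k ^ 2 * Real.sqrt (k ^ 4 - k ^ 2 + 1) / L ^ 2) d x
      ∧ 0 < d := by
  obtain ⟨hx0, hx1⟩ := hx
  have hx2 : x ^ 2 < 1 := by nlinarith
  have hK := hasDerivAt_ellipticK ⟨hx0, hx1⟩
  set D : ℝ := ∫ θ in (0:ℝ)..(π/2),
    x * Real.sin θ ^ 2 / Real.sqrt (1 - x ^ 2 * Real.sin θ ^ 2) ^ 3 with hD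
  have hQ : HasDerivAt (fun k : ℝ => k ^ 4 - k ^ 2 + 1) (4 * x ^ 3 - 2 * x) x := by
    have := ((hasDerivAt_pow 4 x).sub (hasDerivAt_pow 2 x)).add_const 1
    simpa using this
  have hS : HasDerivAt (fun k : ℝ => Real.sqrt (k ^ 4 - k ^ 2 + 1))
      (1 / (2 * Real.sqrt (x ^ 4 - x ^ 2 + 1)) * (4 * x ^ 3 - 2 * x)) x :=
    (Real.hasDerivAt_sqrt (Q_pos x).ne').comp x hQ
  have hK2 : HasDerivAt (fun k : ℝ => 16 * ellipticK k ^ 2)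
      (16 * (2 * ellipticK x ^ 1 * D)) x := (hK.pow 2).const_mul 16
  have hW := (hK2.mul hS).div_const (L ^ 2)
  refine ⟨_, hW, ?_⟩
  -- positivity of the derivative
  set s : ℝ := Real.sqrt (x ^ 4 - x ^ 2 + 1) with hs
  have hs0 : 0 < s := sqrtQ_pos x
  have hs2 : s ^ 2 = x ^ 4 - x ^ 2 + 1 := sq_sqrtQ x
  have hKpos : 0 < ellipticK x := ellipticK_pos hx2
  have hDge : x / 2 * ellipticK x ≤ D := deriv_ge ⟨hx0, hx1⟩
  have hkey : 0 < 4 * ellipticK x * D * (x ^ 4 - x ^ 2 + 1) +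
      ellipticK x ^ 2 * (4 * x ^ 3 - 2 * x) := by
    have h5 : 4 * ellipticK x * (x ^ 4 - x ^ 2 + 1) * (x / 2 * ellipticK x) ≤
        4 * ellipticK x * (x ^ 4 - x ^ 2 + 1) * D :=
      mul_le_mul_of_nonneg_left hDge
        (mul_nonneg (by nlinarith [hKpos] : (0:ℝ) ≤ 4 * ellipticK x) (Q_pos x).le)
    nlinarith [mul_pos (mul_pos hx0 (mul_pos hKpos hKpos))
      (by positivity : (0:ℝ) < x ^ 4 + x ^ 2)]
  have heq : (16 * (2 * ellipticK x ^ 1 * D) * s +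
      16 * ellipticK x ^ 2 * (1 / (2 * s) * (4 * x ^ 3 - 2 * x))) / L ^ 2 =
      (4 * ellipticK x * D * s ^ 2 + ellipticK x ^ 2 * (4 * x ^ 3 - 2 * x)) *
        (16 / (2 * s * L ^ 2)) := by
    field_simp
    ring
  rw [heq, hs2]
  positivity

lemma W_strictMono {L : ℝ} (hL : 0 < L) :
    StrictMonoOn (fun k => 16 * ellipticK k ^ 2 * Real.sqrt (k ^ 4 - k ^ 2 + 1) / L ^ 2)
      (Ioo (0:ℝ) 1) := by
  apply strictMonoOn_of_deriv_pos (convex_Ioo 0 1)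
  · intro x hx
    obtain ⟨d, hd, _⟩ := W_deriv hL hx
    exact hd.continuousAt.continuousWithinAt
  · intro x hx
    rw [interior_Ioo] at hx
    obtain ⟨d, hd, hdpos⟩ := W_deriv hL hx
    rwa [hd.deriv]

/-! ### Limits -/

lemma K_tendsto_zero : Tendsto ellipticK (nhdsWithin 0 (Ioi 0)) (nhds (π/2)) := by
  have hval : (π/2 : ℝ) = ∫ θ in (0:ℝ)..(π/2), (1:ℝ) := by simp
  rw [hval]
  apply intervalIntegral.tendsto_integral_filter_of_dominated_convergence (fun _ => (2:ℝ))
  · filter_upwards [Ioo_mem_nhdsGT_of_mem (⟨le_refl 0, one_pos⟩ : (0:ℝ) ∈ Ico (0:ℝ) 1)]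
      with k hk
    have hk2 : k ^ 2 < 1 := by nlinarith [hk.1, hk.2]
    exact (cont_div_sqrt hk2 continuous_const).aestronglyMeasurable.restrict
  · filter_upwards [Ioo_mem_nhdsGT_of_mem (⟨le_refl 0, by norm_num⟩ :
      (0:ℝ) ∈ Ico (0:ℝ) (1/2))] with k hk
    apply MeasureTheory.ae_of_all
    intro θ _
    have hu : (1:ℝ)/4 ≤ 1 - k ^ 2 * Real.sin θ ^ 2 := by
      nlinarith [Real.sin_sq_le_one θ, sq_nonneg k, hk.1, hk.2, sq_nonneg (Real.sin θ)]
    have hsq : (1:ℝ)/2 ≤ Real.sqrt (1 - k ^ 2 * Real.sin θ ^ 2) := by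
      have h14 : Real.sqrt (1/4 : ℝ) = 1/2 := by
        rw [show (1:ℝ)/4 = (1/2)^2 by norm_num, Real.sqrt_sq (by norm_num)]
      calc (1:ℝ)/2 = Real.sqrt (1/4) := h14.symm
        _ ≤ _ := Real.sqrt_le_sqrt hu
    rw [Real.norm_eq_abs, abs_of_nonneg (by positivity), div_le_iff₀ (by linarith)]
    linarith
  · exact intervalIntegrable_const
  · apply MeasureTheory.ae_of_all
    intro θ _
    have hc : ContinuousAt (fun k : ℝ => 1 / Real.sqrt (1 - k ^ 2 * Real.sin θ ^ 2)) 0 := by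
      apply ContinuousAt.div continuousAt_const
      · exact ContinuousAt.sqrt (by fun_prop)
      · simp
    have h' : Tendsto (fun k : ℝ => 1 / Real.sqrt (1 - k ^ 2 * Real.sin θ ^ 2))
        (nhdsWithin 0 (Ioi 0)) (nhds (1 / Real.sqrt (1 - (0:ℝ) ^ 2 * Real.sin θ ^ 2))) :=
      hc.tendsto.mono_left nhdsWithin_le_nhds
    simpa using h'

lemma omega_tendsto_zero {L : ℝ} (hL : 0 < L) :
    Tendsto (omegaOf L) (nhdsWithin 0 (Ioi 0)) (nhds (4 * π ^ 2 / L ^ 2)) := by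
  have hS : Tendsto (fun k : ℝ => Real.sqrt (k ^ 4 - k ^ 2 + 1)) (nhdsWithin 0 (Ioi 0))
      (nhds 1) := by
    have hc : ContinuousAt (fun k : ℝ => Real.sqrt (k ^ 4 - k ^ 2 + 1)) 0 :=
      ContinuousAt.sqrt (by fun_prop)
    have h' : Tendsto (fun k : ℝ => Real.sqrt (k ^ 4 - k ^ 2 + 1)) (nhdsWithin 0 (Ioi 0))
        (nhds (Real.sqrt ((0:ℝ) ^ 4 - (0:ℝ) ^ 2 + 1))) :=
      hc.tendsto.mono_left nhdsWithin_le_nhds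
    simpa using h'
  have hW : Tendsto (fun k => 16 * ellipticK k ^ 2 * Real.sqrt (k ^ 4 - k ^ 2 + 1) / L ^ 2)
      (nhdsWithin 0 (Ioi 0)) (nhds (16 * (π/2) ^ 2 * 1 / L ^ 2)) :=
    (((K_tendsto_zero.pow 2).const_mul 16).mul hS).div_const _
  have hval : (16 * (π/2) ^ 2 * 1 / L ^ 2 : ℝ) = 4 * π ^ 2 / L ^ 2 := by ring
  rw [hval] at hW
  apply Tendsto.congr' _ hW
  filter_upwards [Ioo_mem_nhdsGT_of_mem (⟨le_refl 0, one_pos⟩ : (0:ℝ) ∈ Ico (0:ℝ) 1)]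
    with k hk
  exact (omega_eq hL (by nlinarith [hk.1, hk.2])).symm

lemma K_lower {k : ℝ} (hk : k ∈ Ioo (0:ℝ) 1) :
    Real.arsinh (π/2 / Real.sqrt (1 - k ^ 2)) ≤ ellipticK k := by
  obtain ⟨hk0, hk1⟩ := hk
  have hk2 : k ^ 2 < 1 := by nlinarith
  have ha0 : (0:ℝ) < 1 - k ^ 2 := by linarith
  have hsa : 0 < Real.sqrt (1 - k ^ 2) := Real.sqrt_pos.2 ha0
  have hftc : (∫ θ in (0:ℝ)..(π/2), 1 / Real.sqrt ((1 - k ^ 2) + (π/2 - θ) ^ 2)) =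
      Real.arsinh (π/2 / Real.sqrt (1 - k ^ 2)) := by
    have hder : ∀ θ ∈ Set.uIcc (0:ℝ) (π/2),
        HasDerivAt (fun θ : ℝ => Real.arsinh ((θ - π/2) / Real.sqrt (1 - k ^ 2)))
          (1 / Real.sqrt ((1 - k ^ 2) + (π/2 - θ) ^ 2)) θ := by
      intro θ _
      have h1 : HasDerivAt (fun θ : ℝ => (θ - π/2) / Real.sqrt (1 - k ^ 2))
          (1 / Real.sqrt (1 - k ^ 2)) θ := by
        simpa using ((hasDerivAt_id θ).sub_const (π/2)).div_const (Real.sqrt (1 - k ^ 2))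
      have h2 := (Real.hasDerivAt_arsinh _).comp θ h1
      refine h2.congr_deriv (Eq.symm ?_)
      have hpos : (0:ℝ) < (1 - k ^ 2) + (π/2 - θ) ^ 2 := by positivity
      have hx : 1 + ((θ - π/2) / Real.sqrt (1 - k ^ 2)) ^ 2 =
          ((1 - k ^ 2) + (π/2 - θ) ^ 2) / (1 - k ^ 2) := by
        rw [div_pow, Real.sq_sqrt ha0.le]
        field_simp
        ring
      rw [hx, show ((1 - k ^ 2) + (π/2 - θ) ^ 2) / (1 - k ^ 2) =
          ((1 - k ^ 2) + (π/2 - θ) ^ 2) / Real.sqrt (1 - k ^ 2) ^ 2 by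
            rw [Real.sq_sqrt ha0.le],
        Real.sqrt_div hpos.le, Real.sqrt_sq hsa.le]
      rw [one_div, one_div]
      rw [mul_comm]
      rw [← mul_inv]
      congr 1
      field_simp
    have hcont : Continuous fun θ : ℝ => 1 / Real.sqrt ((1 - k ^ 2) + (π/2 - θ) ^ 2) := by
      apply Continuous.div continuous_const
      · apply Continuous.sqrt
        continuity
      · intro θ
        have : (0:ℝ) < (1 - k ^ 2) + (π/2 - θ) ^ 2 := by positivity
        positivity
    rw [intervalIntegral.integral_eq_sub_of_hasDerivAt hder (hcont.intervalIntegrable _ _)]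
    rw [show (π/2 - π/2 : ℝ) = 0 by ring, show ((0:ℝ) - π/2) / Real.sqrt (1 - k ^ 2) =
      -(π/2 / Real.sqrt (1 - k ^ 2)) by ring]
    rw [zero_div, Real.arsinh_zero, Real.arsinh_neg]
    ring
  rw [← hftc]
  apply intervalIntegral.integral_mono_on (by positivity)
  · apply Continuous.intervalIntegrable
    apply Continuous.div continuous_const
    · apply Continuous.sqrt; continuity
    · intro θ
      have : (0:ℝ) < (1 - k ^ 2) + (π/2 - θ) ^ 2 := by positivity
      positivity
  · exact (cont_div_sqrt hk2 continuous_const).intervalIntegrable _ _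
  · intro θ hθ
    have hcos0 : 0 ≤ Real.cos θ := Real.cos_nonneg_of_mem_Icc
      ⟨by linarith [hθ.1, Real.pi_pos], hθ.2⟩
    have hcos : Real.cos θ ≤ π/2 - θ := by
      have h := Real.sin_le (by linarith [hθ.2] : (0:ℝ) ≤ π/2 - θ)
      rwa [Real.sin_pi_div_two_sub] at h
    have hsq : Real.cos θ ^ 2 ≤ (π/2 - θ) ^ 2 := by nlinarith
    have hsc := Real.sin_sq_add_cos_sq θ
    have h1 : 1 - k ^ 2 * Real.sin θ ^ 2 ≤ (1 - k ^ 2) + (π/2 - θ) ^ 2 := by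
      nlinarith [sq_nonneg (Real.cos θ), sq_nonneg k]
    have hu := u_pos hk2 θ
    apply one_div_le_one_div_of_le (Real.sqrt_pos.2 hu)
    exact Real.sqrt_le_sqrt h1

lemma K_tendsto_one : Tendsto ellipticK (nhdsWithin 1 (Iio 1)) atTop := by
  have harsinh : Tendsto Real.arsinh atTop atTop := by
    apply Monotone.tendsto_atTop_atTop Real.arsinh_strictMono.monotone
    intro b
    exact ⟨Real.sinh b, (Real.arsinh_sinh b).ge⟩
  have hsqrt : Tendsto (fun k : ℝ => Real.sqrt (1 - k ^ 2)) (nhdsWithin 1 (Iio 1))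
      (nhdsWithin 0 (Ioi 0)) := by
    rw [tendsto_nhdsWithin_iff]
    constructor
    · have hc : ContinuousAt (fun k : ℝ => Real.sqrt (1 - k ^ 2)) 1 :=
        ContinuousAt.sqrt (by fun_prop)
      have h' : Tendsto (fun k : ℝ => Real.sqrt (1 - k ^ 2)) (nhdsWithin 1 (Iio 1))
          (nhds (Real.sqrt (1 - (1:ℝ) ^ 2))) :=
        hc.tendsto.mono_left nhdsWithin_le_nhds
      simpa using h'
    · filter_upwards [Ioo_mem_nhdsLT_of_mem (⟨zero_lt_one, le_refl 1⟩ :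
        (1:ℝ) ∈ Ioc (0:ℝ) 1)] with k hk
      have : k ^ 2 < 1 := by nlinarith [hk.1, hk.2]
      exact Real.sqrt_pos.2 (by linarith)
  have hinv : Tendsto (fun k : ℝ => π/2 / Real.sqrt (1 - k ^ 2)) (nhdsWithin 1 (Iio 1))
      atTop := by
    have h1 : Tendsto (fun y : ℝ => π/2 / y) (nhdsWithin 0 (Ioi 0)) atTop := by
      simp only [div_eq_mul_inv]
      exact Tendsto.const_mul_atTop (by positivity) tendsto_inv_nhdsGT_zero
    exact h1.comp hsqrt
  have hlow : Tendsto (fun k : ℝ => Real.arsinh (π/2 / Real.sqrt (1 - k ^ 2)))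
      (nhdsWithin 1 (Iio 1)) atTop := harsinh.comp hinv
  apply tendsto_atTop_mono' _ _ hlow
  filter_upwards [Ioo_mem_nhdsLT_of_mem (⟨zero_lt_one, le_refl 1⟩ : (1:ℝ) ∈ Ioc (0:ℝ) 1)]
    with k hk
  exact K_lower hk

lemma omega_tendsto_one {L : ℝ} (hL : 0 < L) :
    Tendsto (omegaOf L) (nhdsWithin 1 (Iio 1)) atTop := by
  apply tendsto_atTop_mono' _ _ K_tendsto_one
  filter_upwards [Ioo_mem_nhdsLT_of_mem (⟨zero_lt_one, le_refl 1⟩ : (1:ℝ) ∈ Ioc (0:ℝ) 1),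
    K_tendsto_one.eventually_ge_atTop (L ^ 2 / 8)] with k hk hKk
  have hk2 : k ^ 2 < 1 := by nlinarith [hk.1, hk.2]
  rw [omega_eq hL hk2.le]
  have hQ : (1:ℝ)/2 ≤ Real.sqrt (k ^ 4 - k ^ 2 + 1) := by
    have h14 : Real.sqrt (1/4 : ℝ) = 1/2 := by
      rw [show (1:ℝ)/4 = (1/2)^2 by norm_num, Real.sqrt_sq (by norm_num)]
    calc (1:ℝ)/2 = Real.sqrt (1/4) := h14.symm
      _ ≤ _ := Real.sqrt_le_sqrt (by nlinarith [sq_nonneg (k ^ 2 - 1/2)])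
  have hK0 : 0 < ellipticK k := ellipticK_pos hk2
  rw [le_div_iff₀ (by positivity)]
  nlinarith [mul_le_mul_of_nonneg_left hQ (by positivity : (0:ℝ) ≤ 16 * ellipticK k ^ 2),
    mul_le_mul_of_nonneg_left hKk hK0.le]

/-! ### Main theorem -/

theorem stmt_2 (L : ℝ) (hL : L > 0) :
    StrictMonoOn (omegaOf L) (Set.Ioo 0 1) ∧
    Filter.Tendsto (omegaOf L) (nhdsWithin 0 (Set.Ioi 0))
      (nhds (4 * Real.pi ^ 2 / L ^ 2)) ∧
    Filter.Tendsto (omegaOf L) (nhdsWithin 1 (Set.Iio 1)) Filter.atTop ∧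
    Set.BijOn (omegaOf L) (Set.Ioo 0 1) (Set.Ioi (4 * Real.pi ^ 2 / L ^ 2)) := by
  have hmono : StrictMonoOn (omegaOf L) (Set.Ioo 0 1) := by
    intro a ha b hb hab
    rw [omega_eq hL (by nlinarith [ha.1, ha.2] : a ^ 2 ≤ 1),
      omega_eq hL (by nlinarith [hb.1, hb.2] : b ^ 2 ≤ 1)]
    exact W_strictMono hL ha hb hab
  have h0 := omega_tendsto_zero hL
  have h1 := omega_tendsto_one hL
  refine ⟨hmono, h0, h1, ?_, hmono.injOn, ?_⟩
  · -- MapsTo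
    intro k hk
    have hk2 : k/2 ∈ Ioo (0:ℝ) 1 := ⟨by linarith [hk.1], by linarith [hk.1, hk.2]⟩
    have hlt : omegaOf L (k/2) < omegaOf L k := hmono hk2 hk (by linarith [hk.1])
    have hle : 4 * π ^ 2 / L ^ 2 ≤ omegaOf L (k/2) := by
      apply le_of_tendsto h0
      filter_upwards [Ioo_mem_nhdsGT_of_mem (⟨le_refl 0, by linarith [hk.1]⟩ :
        (0:ℝ) ∈ Ico (0:ℝ) (k/2))] with x hx
      exact (hmono ⟨hx.1, lt_trans hx.2 hk2.2⟩ hk2 hx.2).le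
    exact lt_of_le_of_lt hle hlt
  · -- SurjOn
    intro y hy
    rw [mem_Ioi] at hy
    obtain ⟨b, hby, hb⟩ : ∃ b, y < omegaOf L b ∧ b ∈ Ioo (0:ℝ) 1 :=
      ((h1.eventually_gt_atTop y).and (Ioo_mem_nhdsLT_of_mem
        (⟨zero_lt_one, le_refl 1⟩ : (1:ℝ) ∈ Ioc (0:ℝ) 1))).exists
    obtain ⟨a, hay, ha⟩ : ∃ a, omegaOf L a < y ∧ a ∈ Ioo (0:ℝ) b := by
      have hev : ∀ᶠ x in nhdsWithin 0 (Ioi (0:ℝ)), omegaOf L x < y :=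
        h0.eventually_lt_const hy
      exact (hev.and (Ioo_mem_nhdsGT_of_mem (⟨le_refl 0, hb.1⟩ :
        (0:ℝ) ∈ Ico (0:ℝ) b))).exists
    have hsub : Icc a b ⊆ Ioo (0:ℝ) 1 := fun x hx =>
      ⟨lt_of_lt_of_le ha.1 hx.1, lt_of_le_of_lt hx.2 hb.2⟩
    have hcont : ContinuousOn (omegaOf L) (Icc a b) := by
      apply ContinuousOn.congr (f := fun k =>
        16 * ellipticK k ^ 2 * Real.sqrt (k ^ 4 - k ^ 2 + 1) / L ^ 2)
      · intro x hx
        obtain ⟨d, hd, _⟩ := W_deriv hL (hsub hx)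
        exact hd.continuousAt.continuousWithinAt
      · intro x hx
        have := hsub hx
        exact omega_eq hL (by nlinarith [this.1, this.2])
    obtain ⟨c, hcmem, hcy⟩ := intermediate_value_Icc ha.2.le hcont ⟨hay.le, hby.le⟩
    exact ⟨c, hsub hcmem, hcy⟩
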